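/- Let v₀ ∈ ℝⁿ and let F be a C^∞ real-valued function on an open neighbourhood U of (0,0,v₀) in ℝ² × ℝⁿ such that for every v with (0,0,v) ∈ U one has F(u₁,u₂,v) = o(‖(u₁,u₂)‖) as (u₁,u₂) → (0,0). Then there exist an open neighbourhood U′ ⊆ U of (0,0,v₀) and C^∞ functions F₁(u₁,u₂,v) and F₂(u₂,v) (the latter depending only on (u₂,v)) such that F(u₁,u₂,v) = u₁·F₁(u₁,u₂,v) + u₂²·F₂(u₂,v) for all (u₁,u₂,v) ∈ U′. -/

import Mathlib

open Topology Filter Asymptotics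

open MeasureTheory Metric Set
open scoped ContDiff

set_option linter.unusedSectionVars false


section Param
variable {H : Type} [NormedAddCommGroup H] [NormedSpace ℝ H] [ProperSpace H]
variable {F : Type} [NormedAddCommGroup F] [NormedSpace ℝ F] [CompleteSpace F]

lemma contDiff_pfderiv {g : ℝ × H → F} (hg : ContDiff ℝ ∞ g) :
    ContDiff ℝ ∞ (fun q : ℝ × H => fderiv ℝ (fun y : H => g (q.1, y)) q.2) := by
  apply ContDiff.fderiv (f := fun (q : ℝ × H) (y : H) => g (q.1, y)) (g := Prod.snd) (m := ∞)
  · exact hg.comp ((contDiff_fst.fst).prodMk contDiff_snd)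
  · exact contDiff_snd
  · exact le_of_eq (by rfl)

lemma hasFDerivAt_parint (g : ℝ × H → F) (hg : ContDiff ℝ ∞ g) (x₀ : H) :
    HasFDerivAt (fun x => ∫ t in (0:ℝ)..1, g (t, x))
      (∫ t in (0:ℝ)..1, fderiv ℝ (fun y => g (t, y)) x₀) x₀ := by
  have hslice : ∀ t : ℝ, ContDiff ℝ ∞ (fun y : H => g (t, y)) :=
    fun t => hg.comp (contDiff_const.prodMk contDiff_id)
  have hgfd := contDiff_pfderiv (H := H) hg
  obtain ⟨C, hC⟩ := (isCompact_Icc.prod (isCompact_closedBall x₀ 1)).exists_bound_of_continuousOn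
    (hgfd.continuous.continuousOn (s := Icc (0:ℝ) 1 ×ˢ closedBall x₀ 1))
  apply intervalIntegral.hasFDerivAt_integral_of_dominated_of_fderiv_le
    (F' := fun (x : H) (t : ℝ) => fderiv ℝ (fun y : H => g (t, y)) x)
    (bound := fun _ => C) (s := ball x₀ 1) (ball_mem_nhds x₀ one_pos)
  · exact Eventually.of_forall fun x =>
      ((hg.continuous.comp (continuous_id.prodMk continuous_const)).aestronglyMeasurable)
  · exact ((hg.continuous.comp (continuous_id.prodMk continuous_const)).intervalIntegrable 0 1)
  · exact ((hgfd.continuous.comp (continuous_id.prodMk continuous_const)).aestronglyMeasurable)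
  · refine Eventually.of_forall fun t ht x hx => hC (t, x) ⟨?_, ball_subset_closedBall hx⟩
    rw [Set.uIoc_of_le (by norm_num : (0:ℝ) ≤ 1)] at ht
    exact ⟨ht.1.le, ht.2⟩
  · exact intervalIntegrable_const
  · exact Eventually.of_forall fun t ht x hx =>
      ((hslice t).differentiable (by norm_num)).differentiableAt.hasFDerivAt
end Param
section Param2
variable {H : Type} [NormedAddCommGroup H] [NormedSpace ℝ H] [ProperSpace H]

lemma contDiff_parint_nat (m : ℕ) :
    ∀ {F : Type} [NormedAddCommGroup F] [NormedSpace ℝ F] [CompleteSpace F]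
      (g : ℝ × H → F), ContDiff ℝ ∞ g →
      ContDiff ℝ (m : WithTop ℕ∞) (fun x : H => ∫ t in (0:ℝ)..1, g (t, x)) := by
  induction m with
  | zero =>
    intro F _ _ _ g hg
    have hd : Differentiable ℝ (fun x : H => ∫ t in (0:ℝ)..1, g (t, x)) :=
      fun x => (hasFDerivAt_parint g hg x).differentiableAt
    exact contDiff_zero.2 hd.continuous
  | succ m ih =>
    intro F _ _ _ g hg
    have hd : Differentiable ℝ (fun x : H => ∫ t in (0:ℝ)..1, g (t, x)) :=
      fun x => (hasFDerivAt_parint g hg x).differentiableAt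
    have hcast : ((m + 1 : ℕ) : WithTop ℕ∞) = (m : WithTop ℕ∞) + 1 := by push_cast; ring
    rw [hcast, contDiff_succ_iff_fderiv]
    refine ⟨hd, fun h => absurd h (by exact_mod_cast WithTop.natCast_ne_top m), ?_⟩
    have hfd : fderiv ℝ (fun x : H => ∫ t in (0:ℝ)..1, g (t, x))
        = fun x : H => ∫ t in (0:ℝ)..1, fderiv ℝ (fun y : H => g (t, y)) x :=
      funext fun x => (hasFDerivAt_parint g hg x).fderiv
    rw [hfd]
    exact ih (fun q : ℝ × H => fderiv ℝ (fun y : H => g (q.1, y)) q.2) (contDiff_pfderiv hg)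

lemma contDiff_parint {F : Type} [NormedAddCommGroup F] [NormedSpace ℝ F] [CompleteSpace F]
    (g : ℝ × H → F) (hg : ContDiff ℝ ∞ g) :
    ContDiff ℝ ∞ (fun x : H => ∫ t in (0:ℝ)..1, g (t, x)) :=
  contDiff_infty.2 fun m => contDiff_parint_nat m g hg
end Param2
set_option linter.unusedSectionVars false

lemma exists_global_ext {E : Type} [NormedAddCommGroup E] [NormedSpace ℝ E]
    [FiniteDimensional ℝ E] {U : Set E} (hU : IsOpen U) {p₀ : E} (hp₀ : p₀ ∈ U)
    (F : E → ℝ) (hF : ContDiffOn ℝ ∞ F U) :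
    ∃ G : E → ℝ, ContDiff ℝ ∞ G ∧ ∃ r : ℝ, 0 < r ∧ Metric.ball p₀ r ⊆ U ∧
      ∀ p ∈ Metric.ball p₀ r, G p = F p := by
  obtain ⟨d, d_pos, hd⟩ := Euclidean.nhds_basis_closedBall.mem_iff.1 (hU.mem_nhds hp₀)
  let c : ContDiffBump (toEuclidean p₀) :=
    { rIn := d / 2, rOut := d, rIn_pos := half_pos d_pos, rIn_lt_rOut := half_lt_self d_pos }
  set χ : E → ℝ := fun p => c (toEuclidean p) with hχ
  have hχs : ContDiff ℝ ∞ χ := c.contDiff.comp toEuclidean.contDiff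
  have hsupp : tsupport χ ⊆ U := by
    refine Subset.trans ?_ hd
    have h1 : Function.support χ ⊆ Euclidean.ball p₀ d := by
      intro p hp
      have : toEuclidean p ∈ Function.support c := by simpa [hχ] using hp
      rw [c.support_eq] at this
      simpa [Euclidean.ball_eq_preimage] using this
    rw [tsupport, ← Euclidean.closure_ball _ d_pos.ne']
    exact closure_mono h1
  set G : E → ℝ := fun p => χ p * F p with hG
  have hGs : ContDiff ℝ ∞ G := by
    rw [contDiff_iff_contDiffAt]
    intro p
    by_cases hp : p ∈ U
    · exact (hχs.contDiffAt).mul (hF.contDiffAt (hU.mem_nhds hp))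
    · have hp' : p ∉ tsupport χ := fun h => hp (hsupp h)
      have hz : ∀ᶠ q in 𝓝 p, G q = 0 := by
        filter_upwards [(isClosed_tsupport χ).isOpen_compl.mem_nhds hp'] with q hq
        simp [hG, image_eq_zero_of_notMem_tsupport hq]
      exact contDiffAt_const.congr_of_eventuallyEq hz
  have hop : IsOpen (Euclidean.ball p₀ (d/2) ∩ U) := Euclidean.isOpen_ball.inter hU
  obtain ⟨r, r_pos, hr⟩ := Metric.isOpen_iff.1 hop p₀
    ⟨Euclidean.mem_ball_self (half_pos d_pos), hp₀⟩
  refine ⟨G, hGs, r, r_pos, fun p hp => (hr hp).2, fun p hp => ?_⟩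
  have h1 : χ p = 1 := by
    apply c.one_of_mem_closedBall
    exact Metric.ball_subset_closedBall (by simpa [Euclidean.ball_eq_preimage] using (hr hp).1)
  simp [hG, h1]

/-- division lemma for smooth functions that are `o(‖(u₁,u₂)‖)`:
if `F` is `C^∞` on an open neighbourhood `U` of `(0,0,v₀)` in `ℝ² × ℝⁿ` and
`F(u₁,u₂,v) = o(‖(u₁,u₂)‖)` as `(u₁,u₂) → (0,0)` for every `v` with `(0,0,v) ∈ U`,
then on some smaller open neighbourhood `U'` one can write
`F(u₁,u₂,v) = u₁·F₁(u₁,u₂,v) + u₂²·F₂(u₂,v)` with `F₁`, `F₂` of class `C^∞`,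
`F₂` depending only on `(u₂,v)`. -/
theorem stmt_0 {n : ℕ} (v₀ : Fin n → ℝ) (U : Set (ℝ × ℝ × (Fin n → ℝ)))
    (hU : IsOpen U) (hU₀ : ((0 : ℝ), (0 : ℝ), v₀) ∈ U)
    (F : ℝ × ℝ × (Fin n → ℝ) → ℝ)
    (hF : ContDiffOn ℝ (⊤ : ℕ∞) F U)
    (hlittleo : ∀ v : Fin n → ℝ, ((0 : ℝ), (0 : ℝ), v) ∈ U →
      (fun u : ℝ × ℝ => F (u.1, u.2, v)) =o[𝓝 (0 : ℝ × ℝ)] fun u => ‖u‖) :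
    ∃ U' : Set (ℝ × ℝ × (Fin n → ℝ)), IsOpen U' ∧ ((0 : ℝ), (0 : ℝ), v₀) ∈ U' ∧ U' ⊆ U ∧
    ∃ V' : Set (ℝ × (Fin n → ℝ)), IsOpen V' ∧ ((0 : ℝ), v₀) ∈ V' ∧
    ∃ F₁ : ℝ × ℝ × (Fin n → ℝ) → ℝ, ∃ F₂ : ℝ × (Fin n → ℝ) → ℝ,
      ContDiffOn ℝ (⊤ : ℕ∞) F₁ U' ∧ ContDiffOn ℝ (⊤ : ℕ∞) F₂ V' ∧
      ∀ p ∈ U', (p.2.1, p.2.2) ∈ V' ∧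
        F p = p.1 * F₁ p + p.2.1 ^ 2 * F₂ (p.2.1, p.2.2) := by
  obtain ⟨G, hGs, r, r_pos, hrU, hGF⟩ := exists_global_ext hU hU₀ F hF
  set p₀ : ℝ × ℝ × (Fin n → ℝ) := ((0:ℝ), (0:ℝ), v₀) with hp₀
  set e₁ : ℝ × ℝ × (Fin n → ℝ) := ((1:ℝ), (0:ℝ), (0 : Fin n → ℝ)) with he₁
  set e₂ : ℝ × ℝ × (Fin n → ℝ) := ((0:ℝ), (1:ℝ), (0 : Fin n → ℝ)) with he₂
  have hGd : Differentiable ℝ G := hGs.differentiable (by norm_num)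
  set A : ℝ × ℝ × (Fin n → ℝ) → ℝ := fun q => fderiv ℝ G q e₁ with hA
  set B : ℝ × ℝ × (Fin n → ℝ) → ℝ := fun q => fderiv ℝ G q e₂ with hB
  have hAs : ContDiff ℝ ∞ A :=
    (hGs.fderiv_right (le_of_eq rfl)).clm_apply contDiff_const
  have hBs : ContDiff ℝ ∞ B :=
    (hGs.fderiv_right (le_of_eq rfl)).clm_apply contDiff_const
  have hBd : Differentiable ℝ B := hBs.differentiable (by norm_num)
  set B₂ : ℝ × ℝ × (Fin n → ℝ) → ℝ := fun q => fderiv ℝ B q e₂ with hB₂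
  have hB₂s : ContDiff ℝ ∞ B₂ :=
    (hBs.fderiv_right (le_of_eq rfl)).clm_apply contDiff_const
  -- the two functions
  set F₁ : ℝ × ℝ × (Fin n → ℝ) → ℝ := fun p => ∫ t in (0:ℝ)..1, A (t * p.1, p.2) with hF₁
  set F₂ : ℝ × (Fin n → ℝ) → ℝ :=
    fun w => ∫ t in (0:ℝ)..1, (1 - t) * B₂ (0, t * w.1, w.2) with hF₂
  have hF₁s : ContDiff ℝ ∞ F₁ := by
    exact contDiff_parint (fun q : ℝ × (ℝ × ℝ × (Fin n → ℝ)) => A (q.1 * q.2.1, q.2.2))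
      (hAs.comp ((contDiff_fst.mul contDiff_snd.fst).prodMk contDiff_snd.snd))
  have hF₂s : ContDiff ℝ ∞ F₂ := by
    exact contDiff_parint (fun q : ℝ × (ℝ × (Fin n → ℝ)) =>
        (1 - q.1) * B₂ (0, q.1 * q.2.1, q.2.2))
      (((contDiff_const.sub contDiff_fst)).mul (hB₂s.comp (contDiff_const.prodMk
        ((contDiff_fst.mul contDiff_snd.fst).prodMk contDiff_snd.snd))))
  have hslice1 : ∀ (a : ℝ) (b : ℝ × (Fin n → ℝ)),
      HasDerivAt (fun s => G (s, b)) (A (a, b)) a := by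
    intro a b
    have h := ((hGd (a, b)).hasFDerivAt).comp_hasDerivAt a
      ((hasDerivAt_id a).prodMk (hasDerivAt_const a b))
    simpa [hA, he₁, Function.comp_def, Prod.mk_zero_zero] using h
  have hsm : ∀ u₂ : ℝ, ((0:ℝ), u₂, (0 : Fin n → ℝ)) = u₂ • e₂ := by
    intro u₂; simp [he₂, Prod.smul_mk]
  have hcurve : ∀ (t u₂ : ℝ) (v : Fin n → ℝ),
      HasDerivAt (fun t : ℝ => (((0:ℝ), t * u₂, v) : ℝ × ℝ × (Fin n → ℝ)))
        ((0:ℝ), u₂, (0 : Fin n → ℝ)) t := by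
    intro t u₂ v
    exact (hasDerivAt_const t (0:ℝ)).prodMk ((hasDerivAt_mul_const u₂).prodMk (hasDerivAt_const t v))
  have hGe₂ : ∀ (u₂ : ℝ) (v : Fin n → ℝ) (t : ℝ),
      HasDerivAt (fun t : ℝ => G (0, t * u₂, v)) (u₂ * B (0, t * u₂, v)) t := by
    intro u₂ v t
    have h := ((hGd ((0:ℝ), t * u₂, v)).hasFDerivAt).comp_hasDerivAt t (hcurve t u₂ v)
    rw [hsm u₂, ContinuousLinearMap.map_smul] at h
    simpa [hB, Function.comp_def] using h
  have hBe₂ : ∀ (u₂ : ℝ) (v : Fin n → ℝ) (t : ℝ),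
      HasDerivAt (fun t : ℝ => B (0, t * u₂, v)) (u₂ * B₂ (0, t * u₂, v)) t := by
    intro u₂ v t
    have h := ((hBd ((0:ℝ), t * u₂, v)).hasFDerivAt).comp_hasDerivAt t (hcurve t u₂ v)
    rw [hsm u₂, ContinuousLinearMap.map_smul] at h
    simpa [hB₂, Function.comp_def] using h
  have identity1 : ∀ p : ℝ × ℝ × (Fin n → ℝ), G p = G (0, p.2) + p.1 * F₁ p := by
    intro p
    have hderiv : ∀ t ∈ uIcc (0:ℝ) 1,
        HasDerivAt (fun t : ℝ => G (t * p.1, p.2)) (A (t * p.1, p.2) * p.1) t := by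
      intro t _
      exact (hslice1 (t * p.1) p.2).comp t (hasDerivAt_mul_const p.1)
    have hint : IntervalIntegrable (fun t : ℝ => A (t * p.1, p.2) * p.1) volume 0 1 := by
      apply Continuous.intervalIntegrable
      exact (hAs.continuous.comp (((continuous_id.mul continuous_const)).prodMk
        continuous_const)).mul continuous_const
    have heq := intervalIntegral.integral_eq_sub_of_hasDerivAt hderiv hint
    rw [intervalIntegral.integral_mul_const] at heq
    simp only [one_mul, zero_mul] at heq
    have hpe : (p.1, p.2) = p := rfl
    rw [hpe] at heq
    have : F₁ p = ∫ t in (0:ℝ)..1, A (t * p.1, p.2) := rfl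
    rw [← this] at heq
    linarith
  have identity2 : ∀ (u₂ : ℝ) (v : Fin n → ℝ),
      G (0, u₂, v) = G (0, 0, v) + u₂ * B (0, 0, v) + u₂ ^ 2 * F₂ (u₂, v) := by
    intro u₂ v
    set ψ : ℝ → ℝ := fun t => G (0, t * u₂, v) + (1 - t) * (u₂ * B (0, t * u₂, v)) with hψdef
    have hψ : ∀ t ∈ uIcc (0:ℝ) 1,
        HasDerivAt ψ (u₂ ^ 2 * ((1 - t) * B₂ (0, t * u₂, v))) t := by
      intro t _
      have h3 : HasDerivAt (fun t : ℝ => u₂ * B (0, t * u₂, v))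
          (u₂ * (u₂ * B₂ (0, t * u₂, v))) t := (hBe₂ u₂ v t).const_mul u₂
      have h4 : HasDerivAt (fun t : ℝ => (1:ℝ) - t) (-1) t := by
        simpa using (hasDerivAt_id t).const_sub 1
      have h6 := (hGe₂ u₂ v t).add (h4.mul h3)
      exact h6.congr_deriv (by ring)
    have hint : IntervalIntegrable
        (fun t : ℝ => u₂ ^ 2 * ((1 - t) * B₂ (0, t * u₂, v))) volume 0 1 := by
      apply Continuous.intervalIntegrable
      apply continuous_const.mul
      exact (continuous_const.sub continuous_id).mul
        (hB₂s.continuous.comp (continuous_const.prodMk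
          ((continuous_id.mul continuous_const).prodMk continuous_const)))
    have heq := intervalIntegral.integral_eq_sub_of_hasDerivAt hψ hint
    rw [intervalIntegral.integral_const_mul] at heq
    have hF2 : F₂ (u₂, v) = ∫ t in (0:ℝ)..1, (1 - t) * B₂ (0, t * u₂, v) := rfl
    rw [← hF2] at heq
    simp only [hψdef, one_mul, zero_mul, sub_self, sub_zero, mul_zero, zero_mul] at heq
    norm_num at heq
    linarith
  have key : ∀ v : Fin n → ℝ, dist v v₀ < r → G (0, 0, v) = 0 ∧ B (0, 0, v) = 0 := by
    intro v hv
    have hvb : (((0:ℝ), (0:ℝ), v) : ℝ × ℝ × (Fin n → ℝ)) ∈ Metric.ball p₀ r := by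
      rw [mem_ball, hp₀, Prod.dist_eq, Prod.dist_eq]
      simp only [dist_self]
      rw [max_eq_right dist_nonneg, max_eq_right dist_nonneg]
      exact hv
    have hc : Continuous (fun u : ℝ × ℝ => ((u.1, u.2, v) : ℝ × ℝ × (Fin n → ℝ))) := by
      fun_prop
    set s : ℝ × ℝ → ℝ := fun u => G (u.1, u.2, v) with hs
    have heqF : s =ᶠ[𝓝 (0 : ℝ × ℝ)] fun u => F (u.1, u.2, v) := by
      have hnb : ∀ᶠ u : ℝ × ℝ in 𝓝 0,
          ((u.1, u.2, v) : ℝ × ℝ × (Fin n → ℝ)) ∈ Metric.ball p₀ r :=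
        hc.continuousAt.eventually_mem (isOpen_ball.mem_nhds hvb)
      filter_upwards [hnb] with u hu
      exact hGF _ hu
    have ho : s =o[𝓝 (0 : ℝ × ℝ)] fun u => ‖u‖ :=
      (hlittleo v (hrU hvb)).congr' heqF.symm (EventuallyEq.refl _ _)
    have hG0 : G (0, 0, v) = 0 := by
      have ht1 : Tendsto s (𝓝 0) (𝓝 (G (0, 0, v))) := (hGs.continuous.comp hc).tendsto 0
      have ht2 : Tendsto s (𝓝 0) (𝓝 0) := ho.isBigO.trans_tendsto tendsto_norm_zero
      exact tendsto_nhds_unique ht1 ht2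
    refine ⟨hG0, ?_⟩
    set J : (ℝ × ℝ) →L[ℝ] (ℝ × ℝ × (Fin n → ℝ)) :=
      (ContinuousLinearMap.fst ℝ ℝ ℝ).prod ((ContinuousLinearMap.snd ℝ ℝ ℝ).prod 0) with hJ
    have hfun : (fun u : ℝ × ℝ => ((u.1, u.2, v) : ℝ × ℝ × (Fin n → ℝ)))
        = fun u => J u + ((0:ℝ), (0:ℝ), v) := by
      funext u
      simp [hJ, Prod.ext_iff]
    have hJd : HasFDerivAt (fun u : ℝ × ℝ => ((u.1, u.2, v) : ℝ × ℝ × (Fin n → ℝ))) J 0 := by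
      rw [hfun]; exact J.hasFDerivAt.add_const _
    have hL : HasFDerivAt s ((fderiv ℝ G ((0:ℝ), (0:ℝ), v)).comp J) 0 :=
      ((hGd _).hasFDerivAt).comp 0 hJd
    have hzero : HasFDerivAt s (0 : (ℝ × ℝ) →L[ℝ] ℝ) 0 := by
      rw [hasFDerivAt_iff_isLittleO_nhds_zero]
      have hfe : (fun h : ℝ × ℝ => s (0 + h) - s 0 - (0 : (ℝ × ℝ) →L[ℝ] ℝ) h) = s := by
        funext h
        simp [hs, hG0]
      rw [hfe]
      exact ho.of_norm_right
    have hLz : (fderiv ℝ G ((0:ℝ), (0:ℝ), v)).comp J = 0 := hL.unique hzero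
    have : B (0, 0, v) = ((fderiv ℝ G ((0:ℝ), (0:ℝ), v)).comp J) ((0:ℝ), (1:ℝ)) := by
      simp [hB, hJ, he₂, Prod.ext_iff]
    rw [this, hLz]
    simp
  refine ⟨Metric.ball p₀ r, isOpen_ball, mem_ball_self r_pos, hrU,
    Metric.ball ((0:ℝ), v₀) r, isOpen_ball, mem_ball_self r_pos,
    F₁, F₂, hF₁s.contDiffOn, hF₂s.contDiffOn, ?_⟩
  intro p hp
  have hp' := mem_ball.1 hp
  rw [hp₀, Prod.dist_eq, max_lt_iff] at hp'
  have h2 : dist p.2 ((0:ℝ), v₀) < r := hp'.2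
  have h2' := h2
  rw [Prod.dist_eq, max_lt_iff] at h2'
  constructor
  · exact mem_ball.2 h2
  · have hvv : dist p.2.2 v₀ < r := h2'.2
    obtain ⟨hG0, hB0⟩ := key p.2.2 hvv
    have hid1 := identity1 p
    have hid2 := identity2 p.2.1 p.2.2
    have hpe : ((0:ℝ), p.2) = (((0:ℝ), p.2.1, p.2.2) : ℝ × ℝ × (Fin n → ℝ)) := rfl
    rw [← hGF p hp, hid1, hpe, hid2, hG0, hB0]
    ring
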